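/- Explicit expansion of the second eigenvector entry: for g ≥ 2, φ_2(x,y) = (−1)^g·(I_2 + V_1 + x) − ((−1)^g / y)·I_1 I_2 V_1 V_2·det T″, where T″ is the (g−2)×(g−2) tridiagonal matrix with diagonal entries T″_{ii} = I_{i+3} + V_{i+2} + x for i = 1,…,g−2, superdiagonal entries T″_{i,i+1} = 1, and subdiagonal entries T″_{i+1,i} = I_{i+3}V_{i+3} for i = 1,…,g−3 (for g = 2 the empty determinant det T″ is 1 by convention). -/

import Mathlib

/-- The Lax matrix `L(I;V)` of the periodic discrete Toda lattice (0-indexed: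
row/column `i : Fin (g+1)` corresponds to the 1-indexed `i+1`).  Its entries are
`L_{ii} = I_{i+1} + V_i` (cyclically, so the last diagonal entry is
`I_1 + V_{g+1}`), `L_{i,i+1} = 1`, `L_{i+1,i} = I_{i+1} V_{i+1}`,
`L_{1,g+1} = (-1)^g I_1 V_1 / y`, `L_{g+1,1} = (-1)^g y`,
all other entries `0`. -/
noncomputable def todaLax (g : ℕ) (I V : Fin (g + 1) → ℂ) (y : ℂ) :
    Matrix (Fin (g + 1)) (Fin (g + 1)) ℂ :=
  Matrix.of fun i j =>
    (if j = i then I (i + 1) + V i else 0)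
    + (if (i : ℕ) + 1 = (j : ℕ) then 1 else 0)
    + (if (j : ℕ) + 1 = (i : ℕ) then I i * V i else 0)
    + (if (i : ℕ) = 0 ∧ (j : ℕ) = g then (-1) ^ g * I 0 * V 0 / y else 0)
    + (if (i : ℕ) = g ∧ (j : ℕ) = 0 then (-1) ^ g * y else 0)

/-- `A = x·𝟙_{g+1} + L`. -/
noncomputable def todaA (g : ℕ) (I V : Fin (g + 1) → ℂ) (x y : ℂ) :
    Matrix (Fin (g + 1)) (Fin (g + 1)) ℂ :=
  x • (1 : Matrix (Fin (g + 1)) (Fin (g + 1)) ℂ) + todaLax g I V y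

/-- For `i = 1, …, g` (here `i : Fin g`), `φ_i(x,y)` is the determinant of the
`g × g` matrix obtained from the first `g` rows of `A` by replacing its `i`-th
column with the `(g+1)`-th column of `A`, all other columns unchanged and in
place. -/
noncomputable def todaPhi (g : ℕ) (I V : Fin (g + 1) → ℂ) (x y : ℂ) (i : Fin g) : ℂ :=
  (Matrix.of fun r c : Fin g =>
    if c = i then todaA g I V x y r.castSucc (Fin.last g)
    else todaA g I V x y r.castSucc c.castSucc).det

/-- `φ_{g+1}(x) = det(x·𝟙_g + L_Λ̄)`, where `L_Λ̄` is the top-left `g × g`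
block of `L`. -/
noncomputable def todaPhiLast (g : ℕ) (I V : Fin (g + 1) → ℂ) (x y : ℂ) : ℂ :=
  (x • (1 : Matrix (Fin g) (Fin g) ℂ) +
    (todaLax g I V y).submatrix Fin.castSucc Fin.castSucc).det

/-- The `(g-2) × (g-2)` tridiagonal matrix `T''` with diagonal entries
`T''_{ii} = I_{i+3} + V_{i+2} + x` (1-indexed `i = 1, …, g-2`), superdiagonal
entries `1`, and subdiagonal entries `T''_{i+1,i} = I_{i+3} V_{i+3}`
(1-indexed `i = 1, …, g-3`). -/
noncomputable def todaT'' (g : ℕ) (I V : Fin (g + 1) → ℂ) (x : ℂ) :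
    Matrix (Fin (g - 2)) (Fin (g - 2)) ℂ :=
  Matrix.of fun r c =>
    if r = c then
      I ⟨(r : ℕ) + 3, by have := r.isLt; omega⟩ +
        V ⟨(r : ℕ) + 2, by have := r.isLt; omega⟩ + x
    else if (r : ℕ) + 1 = (c : ℕ) then 1
    else if (c : ℕ) + 1 = (r : ℕ) then
      I ⟨(r : ℕ) + 2, by have := r.isLt; omega⟩ *
        V ⟨(r : ℕ) + 2, by have := r.isLt; omega⟩
    else 0


noncomputable def Mmat (n : ℕ) (I V : Fin (n + 3) → ℂ) (x y : ℂ) :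
    Matrix (Fin (n + 2)) (Fin (n + 2)) ℂ :=
  Matrix.of fun r c =>
    if (c : ℕ) = 1 then
      (if (r : ℕ) = 0 then (-1) ^ (n + 2) * I 0 * V 0 / y
       else if (r : ℕ) = n + 1 then 1 else 0)
    else if (r : ℕ) = (c : ℕ) then
      x + I ⟨(r : ℕ) + 1, by have := r.isLt; omega⟩ + V ⟨(r : ℕ), by have := r.isLt; omega⟩
    else if (r : ℕ) + 1 = (c : ℕ) then 1
    else if (c : ℕ) + 1 = (r : ℕ) then
      I ⟨(r : ℕ), by have := r.isLt; omega⟩ * V ⟨(r : ℕ), by have := r.isLt; omega⟩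
    else 0

lemma Mmat_entry (n : ℕ) (I V : Fin (n + 3) → ℂ) (x y : ℂ) (r c : Fin (n + 2)) (hg : 2 ≤ n + 2) :
    (if c = ⟨1, hg⟩ then todaA (n + 2) I V x y r.castSucc (Fin.last (n + 2))
     else todaA (n + 2) I V x y r.castSucc c.castSucc) = Mmat n I V x y r c := by
  have hr := r.isLt
  have hc := c.isLt
  simp only [Mmat, todaA, todaLax, Matrix.of_apply, Matrix.add_apply, Matrix.smul_apply,
    Matrix.one_apply, Fin.ext_iff, Fin.coe_castSucc, Fin.val_last, smul_eq_mul, mul_ite,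
    mul_one, mul_zero]
  by_cases h1 : (c : ℕ) = 1
  · simp only [h1, if_true]
    have h2 : ¬ ((n + 2 : ℕ) = (r : ℕ)) := by omega
    have h3 : ¬ ((n : ℕ) + 2 + 1 = (r : ℕ)) := by omega
    have h4 : ¬ ((r : ℕ) = n + 2 ∧ (n + 2 : ℕ) = 0) := by omega
    simp only [h2, h3, h4, if_false, if_neg h4, and_true, add_zero, zero_add]
    by_cases h5 : (r : ℕ) = 0
    · have : ¬ ((r : ℕ) + 1 = n + 2) := by omega
      simp [h5, this]
    · simp only [h5, if_false]
      by_cases h6 : (r : ℕ) + 1 = n + 2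
      · have : (r : ℕ) = n + 1 := by omega
        simp [h6, this]
      · have h7 : ¬ ((r : ℕ) = n + 1) := by omega
        have h8 : ¬ ((r : ℕ) = n + 2) := by omega
        simp [h6, h7, h8]
  · simp only [h1, if_false]
    have h4 : ¬ ((r : ℕ) = 0 ∧ (c : ℕ) = n + 2) := by omega
    have h5 : ¬ ((r : ℕ) = n + 2 ∧ (c : ℕ) = 0) := by omega
    simp only [if_neg h4, if_neg h5, add_zero]
    by_cases hd : (c : ℕ) = (r : ℕ)
    · have hne : ¬ ((r : ℕ) + 1 = (r : ℕ)) := by omega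
      have hIV : I (r.castSucc + 1) = I ⟨(r : ℕ) + 1, by omega⟩ := by
        congr 1
        ext
        simp [Fin.val_add_one_of_lt, Fin.lt_def]
      have hV : V (r.castSucc) = V ⟨(r : ℕ), by omega⟩ := by congr 1
      simp only [hd, if_pos rfl, hne, if_false, add_zero, zero_add, hIV, hV]
      simp only [if_true]
      ring
    · have hd' : ¬ ((r : ℕ) = (c : ℕ)) := fun h => hd h.symm
      simp only [hd, hd', if_false, zero_add, mul_zero]
      by_cases hsup : (r : ℕ) + 1 = (c : ℕ)
      · simp [hsup]; omega
      · simp only [hsup, if_false, zero_add]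
        by_cases hsub : (c : ℕ) + 1 = (r : ℕ)
        · simp only [hsub, if_true, add_zero]
          congr 1 <;> congr 1
        · simp [hsub]

lemma sigma_val (n : ℕ) (b : Fin (n + 1)) :
    (((⟨1, by omega⟩ : Fin (n + 2)).succAbove b) : ℕ) =
      if (b : ℕ) = 0 then 0 else (b : ℕ) + 1 := by
  simp [Fin.succAbove, Fin.lt_def]
  split <;> simp_all

lemma det_lowerTri (n : ℕ) (I V : Fin (n + 3) → ℂ) (x y : ℂ) :
    (((Mmat n I V x y).submatrix (Fin.last (n + 1)).succAbove
        (⟨1, by omega⟩ : Fin (n + 2)).succAbove).submatrix Fin.succ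
        ((0 : Fin (n + 1)).succAbove)).det = 1 := by
  set P := ((Mmat n I V x y).submatrix (Fin.last (n + 1)).succAbove
        (⟨1, by omega⟩ : Fin (n + 2)).succAbove).submatrix Fin.succ
        ((0 : Fin (n + 1)).succAbove) with hP
  have hentry : ∀ a b : Fin n, P a b =
      Mmat n I V x y ⟨(a : ℕ) + 1, by have := a.isLt; omega⟩ ⟨(b : ℕ) + 2, by have := b.isLt; omega⟩ := by
    intro a b
    have h1 : (Fin.last (n + 1)).succAbove (Fin.succ a) =
        (⟨(a : ℕ) + 1, by have := a.isLt; omega⟩ : Fin (n + 2)) := by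
      rw [Fin.succAbove_last]; ext; simp
    have h2 : (⟨1, by omega⟩ : Fin (n + 2)).succAbove ((0 : Fin (n + 1)).succAbove b) =
        (⟨(b : ℕ) + 2, by have := b.isLt; omega⟩ : Fin (n + 2)) := by
      ext; rw [sigma_val]; simp
    simp only [hP, Matrix.submatrix_apply, h1, h2]
  have htri : P.BlockTriangular (OrderDual.toDual) := by
    intro i j hij
    rw [hentry]
    have h : (i : ℕ) < (j : ℕ) := hij
    simp only [Mmat, Matrix.of_apply]
    have c1 : ¬ ((j : ℕ) + 2 = 1) := by omega
    have c2 : ¬ ((i : ℕ) + 1 = (j : ℕ) + 2) := by omega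
    have c3 : ¬ ((i : ℕ) + 1 + 1 = (j : ℕ) + 2) := by omega
    have c4 : ¬ ((j : ℕ) + 2 + 1 = (i : ℕ) + 1) := by omega
    simp [c1, c2, c3, c4, show ¬ ((i : ℕ) = (j : ℕ) + 1) by omega, show ¬ ((i : ℕ) = (j : ℕ)) by omega,
      show ¬ ((j : ℕ) + 2 = (i : ℕ)) by omega]
  rw [Matrix.det_of_lowerTriangular P htri]
  have : ∀ a : Fin n, P a a = 1 := by
    intro a
    rw [hentry]
    simp only [Mmat, Matrix.of_apply]
    have c1 : ¬ ((a : ℕ) + 2 = 1) := by omega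
    have c2 : ¬ ((a : ℕ) + 1 = (a : ℕ) + 2) := by omega
    have c3 : (a : ℕ) + 1 + 1 = (a : ℕ) + 2 := by omega
    simp [c1, c2, c3]
  simp [this]

lemma detN (n : ℕ) (I V : Fin (n + 3) → ℂ) (x y : ℂ) :
    ((Mmat n I V x y).submatrix (Fin.last (n + 1)).succAbove
      (⟨1, by omega⟩ : Fin (n + 2)).succAbove).det =
    x + I 1 + V 0 := by
  rw [Matrix.det_succ_row_zero]
  rw [Finset.sum_eq_single (0 : Fin (n + 1))]
  · have h00 : (Mmat n I V x y).submatrix (Fin.last (n + 1)).succAbove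
        (⟨1, by omega⟩ : Fin (n + 2)).succAbove 0 0 = x + I 1 + V 0 := by
      have h1 : (Fin.last (n + 1)).succAbove 0 = (0 : Fin (n + 2)) := by
        rw [Fin.succAbove_last]; rfl
      have h2 : (⟨1, by omega⟩ : Fin (n + 2)).succAbove 0 = (0 : Fin (n + 2)) := by
        ext; rw [sigma_val]; simp
      simp only [Matrix.submatrix_apply, h1, h2, Mmat, Matrix.of_apply]
      norm_num
    rw [h00, det_lowerTri]
    simp
  · intro j _ hj
    have hj' : (j : ℕ) ≠ 0 := fun h => hj (Fin.ext (by simp [h]))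
    have h1 : (Fin.last (n + 1)).succAbove 0 = (0 : Fin (n + 2)) := by
      rw [Fin.succAbove_last]; rfl
    have h2 : ((⟨1, by omega⟩ : Fin (n + 2)).succAbove j : ℕ) = (j : ℕ) + 1 := by
      rw [sigma_val]; simp [hj']
    have hz : (Mmat n I V x y).submatrix (Fin.last (n + 1)).succAbove
        (⟨1, by omega⟩ : Fin (n + 2)).succAbove 0 j = 0 := by
      simp only [Matrix.submatrix_apply, h1, Mmat, Matrix.of_apply, h2]
      have c1 : ¬ ((j : ℕ) + 1 = 1) := by omega
      have c2 : ¬ ((0 : Fin (n + 2)) : ℕ) = (j : ℕ) + 1 := by simp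
      have c3 : ¬ (((0 : Fin (n + 2)) : ℕ) + 1 = (j : ℕ) + 1) := by simp; omega
      have c4 : ¬ ((j : ℕ) + 1 + 1 = ((0 : Fin (n + 2)) : ℕ)) := by simp
      simp [c1, c2, c3, c4, hj']
    rw [hz]; ring
  · simp

lemma detQ (n : ℕ) (I V : Fin (n + 3) → ℂ) (x y : ℂ) :
    (((Mmat n I V x y).submatrix (0 : Fin (n + 2)).succAbove
        (⟨1, by omega⟩ : Fin (n + 2)).succAbove).submatrix
        ((0 : Fin (n + 1)).succAbove) Fin.succ) = todaT'' (n + 2) I V x := by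
  ext b c
  have h1 : (0 : Fin (n + 2)).succAbove ((0 : Fin (n + 1)).succAbove b) =
      (⟨(b : ℕ) + 2, by have := b.isLt; omega⟩ : Fin (n + 2)) := by
    simp only [Fin.succAbove_zero]; ext; simp
  have h2 : (⟨1, by omega⟩ : Fin (n + 2)).succAbove (Fin.succ c) =
      (⟨(c : ℕ) + 2, by have := c.isLt; omega⟩ : Fin (n + 2)) := by
    ext; rw [sigma_val]; simp
  simp only [Matrix.submatrix_apply, h1, h2, Mmat, todaT'', Matrix.of_apply]
  have c1 : ¬ ((c : ℕ) + 2 = 1) := by omega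
  rw [if_neg c1]
  by_cases hd : (b : ℕ) = (c : ℕ)
  · have e1 : (b : ℕ) + 2 = (c : ℕ) + 2 := by omega
    have e2 : (b = c) := by exact Fin.ext hd
    rw [if_pos e1, if_pos e2]
    ring
  · have e2 : ¬ (b = c) := fun h => hd (congrArg Fin.val h)
    have e1 : ¬ ((b : ℕ) + 2 = (c : ℕ) + 2) := by omega
    rw [if_neg e1, if_neg e2]
    by_cases hs : (b : ℕ) + 1 = (c : ℕ)
    · have : (b : ℕ) + 2 + 1 = (c : ℕ) + 2 := by omega
      simp [this, hs]
    · have s1 : ¬ ((b : ℕ) + 2 + 1 = (c : ℕ) + 2) := by omega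
      rw [if_neg s1, if_neg hs]
      by_cases ht : (c : ℕ) + 1 = (b : ℕ)
      · have : (c : ℕ) + 2 + 1 = (b : ℕ) + 2 := by omega
        simp [this, ht]
      · have t1 : ¬ ((c : ℕ) + 2 + 1 = (b : ℕ) + 2) := by omega
        rw [if_neg t1, if_neg ht]

lemma detN' (n : ℕ) (I V : Fin (n + 3) → ℂ) (x y : ℂ) :
    ((Mmat n I V x y).submatrix (0 : Fin (n + 2)).succAbove
      (⟨1, by omega⟩ : Fin (n + 2)).succAbove).det =
    I 1 * V 1 * (todaT'' (n + 2) I V x).det := by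
  rw [Matrix.det_succ_column_zero]
  rw [Finset.sum_eq_single (0 : Fin (n + 1))]
  · have h2 : (⟨1, by omega⟩ : Fin (n + 2)).succAbove 0 = (0 : Fin (n + 2)) := by
      ext; rw [sigma_val]; simp
    have h00 : (Mmat n I V x y).submatrix (0 : Fin (n + 2)).succAbove
        (⟨1, by omega⟩ : Fin (n + 2)).succAbove 0 0 = I 1 * V 1 := by
      simp only [Matrix.submatrix_apply, h2, Fin.succAbove_zero, Mmat, Matrix.of_apply]
      norm_num
    rw [h00, detQ]
    norm_num
  · intro a _ ha
    have ha' : (a : ℕ) ≠ 0 := fun h => ha (Fin.ext (by simp [h]))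
    have h2 : (⟨1, by omega⟩ : Fin (n + 2)).succAbove 0 = (0 : Fin (n + 2)) := by
      ext; rw [sigma_val]; simp
    have hz : (Mmat n I V x y).submatrix (0 : Fin (n + 2)).succAbove
        (⟨1, by omega⟩ : Fin (n + 2)).succAbove a 0 = 0 := by
      simp only [Matrix.submatrix_apply, h2, Fin.succAbove_zero, Mmat, Matrix.of_apply]
      have c1 : ¬ (((0 : Fin (n + 2)) : ℕ) = 1) := by simp
      have c2 : ¬ ((a.succ : ℕ) = ((0 : Fin (n + 2)) : ℕ)) := by simp
      have c3 : ¬ ((a.succ : ℕ) + 1 = ((0 : Fin (n + 2)) : ℕ)) := by simp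
      have c4 : ¬ (((0 : Fin (n + 2)) : ℕ) + 1 = (a.succ : ℕ)) := by
        simp [Fin.val_succ]; omega
      simp [c1, c2, c3, c4, ha']
    rw [hz]; ring
  · simp

lemma detM (n : ℕ) (I V : Fin (n + 3) → ℂ) (x y : ℂ) :
    (Mmat n I V x y).det =
      (-1) ^ (n + 2) * (I 1 + V 0 + x) -
        (-1) ^ (n + 2) / y * (I 0 * I 1 * V 0 * V 1) * (todaT'' (n + 2) I V x).det := by
  rw [Matrix.det_succ_column (Mmat n I V x y) ⟨1, by omega⟩]
  have hne : (0 : Fin (n + 2)) ≠ Fin.last (n + 1) := by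
    simp [Fin.ext_iff]
  have hzero : ∀ i : Fin (n + 2), i ≠ 0 ∧ i ≠ Fin.last (n + 1) →
      (-1) ^ ((i : ℕ) + ((⟨1, by omega⟩ : Fin (n + 2)) : ℕ)) *
          Mmat n I V x y i ⟨1, by omega⟩ *
          ((Mmat n I V x y).submatrix i.succAbove
            (⟨1, by omega⟩ : Fin (n + 2)).succAbove).det = 0 := by
    intro i ⟨hi0, hil⟩
    have h0 : (i : ℕ) ≠ 0 := fun h => hi0 (Fin.ext (by simp [h]))
    have hl : (i : ℕ) ≠ n + 1 := by simpa [Fin.ext_iff] using hil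
    have : Mmat n I V x y i ⟨1, by omega⟩ = 0 := by
      simp [Mmat, h0, hl, hi0]
    rw [this]; ring
  rw [Fintype.sum_eq_add (0 : Fin (n + 2)) (Fin.last (n + 1)) hne hzero]
  have e0 : Mmat n I V x y 0 ⟨1, by omega⟩ = (-1) ^ (n + 2) * I 0 * V 0 / y := by
    simp [Mmat]
  have el : Mmat n I V x y (Fin.last (n + 1)) ⟨1, by omega⟩ = 1 := by
    simp [Mmat, Fin.val_last]
  rw [e0, el, detN, detN']
  simp only [Fin.val_zero, Fin.val_last, Fin.val_mk]
  ring

/-- Explicit expansion of the second eigenvector entry: for `g ≥ 2`,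
`φ_2(x,y) = (-1)^g·(I_2 + V_1 + x) - ((-1)^g / y)·I_1 I_2 V_1 V_2·det T''`
(for `g = 2` the empty determinant `det T''` is `1`). -/
theorem todaPhi_two_expansion (g : ℕ) (hg : 2 ≤ g) (I V : Fin (g + 1) → ℂ)
    (x y : ℂ) (hy : y ≠ 0) :
    todaPhi g I V x y ⟨1, hg⟩ =
      (-1) ^ g * (I 1 + V 0 + x) -
        (-1) ^ g / y * (I 0 * I 1 * V 0 * V 1) * (todaT'' g I V x).det := by
  obtain ⟨n, rfl⟩ : ∃ n, g = n + 2 := ⟨g - 2, by omega⟩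
  have hPhi : todaPhi (n + 2) I V x y ⟨1, hg⟩ = (Mmat n I V x y).det := by
    unfold todaPhi
    congr 1
    ext r c
    exact Mmat_entry n I V x y r c hg
  rw [hPhi, detM]
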